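/- Let 0 < μ < 1/m_φ, assume F attains a finite minimal value, and let z̄ be a local minimizer of F_μ: there is r > 0 with F_μ(z̄) ≤ F_μ(z) for all z with ‖z − z̄‖ ≤ r. If g is differentiable with L_g-Lipschitz gradient on ℝⁿ, then F(x_{μφ}(z̄)) ≤ F(x) for every x ∈ ℝⁿ with ‖x − x_{μφ}(z̄)‖ ≤ r/(μ L_g + 1); that is, x_{μφ}(z̄) is a local minimizer of F. -/

import Mathlib

open scoped RealInnerProductSpace

noncomputable section

/-- `ℝⁿ` with the Euclidean norm. -/
abbrev En (n : ℕ) := EuclideanSpace ℝ (Fin n)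

/-- `φ` is proper: finite somewhere and never `⊥`. -/
def ProperE {n : ℕ} (φ : En n → EReal) : Prop :=
  (∃ x, φ x ≠ ⊤) ∧ ∀ x, φ x ≠ ⊥

/-- `φ` is `m`-weakly convex: `x ↦ φ x + (m/2)‖x‖²` is convex. -/
def WeaklyConvexOn {n : ℕ} (φ : En n → EReal) (m : ℝ) : Prop :=
  ∀ x y : En n, ∀ a b : ℝ, 0 ≤ a → 0 ≤ b → a + b = 1 →
    φ (a • x + b • y) + (((m / 2) * ‖a • x + b • y‖ ^ 2 : ℝ) : EReal) ≤
      (a : EReal) * (φ x + (((m / 2) * ‖x‖ ^ 2 : ℝ) : EReal)) +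
        (b : EReal) * (φ y + (((m / 2) * ‖y‖ ^ 2 : ℝ) : EReal))

/-- `Mφ` is the Moreau envelope of `φ` with parameter `μ` and `xφ` the associated
(unique) proximal mapping. -/
def IsMoreau {n : ℕ} (φ : En n → EReal) (μ : ℝ) (Mφ : En n → ℝ) (xφ : En n → En n) : Prop :=
  ∀ z : En n,
    (Mφ z : EReal) = φ (xφ z) + ((‖xφ z - z‖ ^ 2 / (2 * μ) : ℝ) : EReal) ∧
    (∀ x, (Mφ z : EReal) ≤ φ x + ((‖x - z‖ ^ 2 / (2 * μ) : ℝ) : EReal)) ∧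
    (∀ x, φ x + ((‖x - z‖ ^ 2 / (2 * μ) : ℝ) : EReal) = (Mφ z : EReal) → x = xφ z)

/-- Real-valued version, for the convex function `g`. -/
def IsMoreauR {n : ℕ} (g : En n → ℝ) (μ : ℝ) (Mg : En n → ℝ) (xg : En n → En n) : Prop :=
  ∀ z : En n,
    Mg z = g (xg z) + ‖xg z - z‖ ^ 2 / (2 * μ) ∧
    (∀ x, Mg z ≤ g x + ‖x - z‖ ^ 2 / (2 * μ)) ∧
    (∀ x, g x + ‖x - z‖ ^ 2 / (2 * μ) = Mg z → x = xg z)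

/-- `ξ ∈ ∂g(x)` for a (finite-valued) convex function `g`. -/
def ConvexSubgradAt {n : ℕ} (g : En n → ℝ) (ξ x : En n) : Prop :=
  ∀ y, g x + ⟪ξ, y - x⟫ ≤ g y

/-- `ξ ∈ ∂φ(x)` for an `m`-weakly convex `φ`: `ξ + m x` is a subgradient of the
convex function `φ + (m/2)‖·‖²` at `x`. -/
def WeakSubgradAt {n : ℕ} (φ : En n → EReal) (m : ℝ) (ξ x : En n) : Prop :=
  ∀ y, φ x + (((m / 2) * ‖x‖ ^ 2 + ⟪ξ + m • x, y - x⟫ : ℝ) : EReal) ≤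
    φ y + (((m / 2) * ‖y‖ ^ 2 : ℝ) : EReal)

section Aux
open Filter Topology

lemma slope_tendsto {n : ℕ} {g : En n → ℝ} {a x : En n} (h : HasGradientAt g a x) (d : En n) :
    Tendsto (fun t : ℝ => (g (x + t • d) - g x) / t) (𝓝[>] (0:ℝ)) (𝓝 ⟪a, d⟫) := by
  have hc : HasDerivAt (fun t : ℝ => x + t • d) d 0 := by
    simpa using ((hasDerivAt_id (0:ℝ)).smul_const d).const_add x
  have hx0 : x + (0:ℝ) • d = x := by simp
  have hψ : HasDerivAt (fun t : ℝ => g (x + t • d)) ⟪a, d⟫ 0 := by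
    have hf : HasFDerivAt g (InnerProductSpace.toDual ℝ (En n) a) (x + (0:ℝ) • d) := by
      rw [hx0]; exact h.hasFDerivAt
    simpa [Function.comp_def] using hf.comp_hasDerivAt 0 hc
  have := (hasDerivAt_iff_tendsto_slope.mp hψ).mono_left
    (nhdsWithin_mono 0 (by intro t ht; exact ne_of_gt ht))
  refine this.congr fun t => ?_
  simp [slope]; ring

lemma grad_subgrad {n : ℕ} {g : En n → ℝ} (hg : ConvexOn ℝ Set.univ g)
    {a x : En n} (h : HasGradientAt g a x) (y : En n) :
    g x + ⟪a, y - x⟫ ≤ g y := by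
  have T := slope_tendsto h (y - x)
  have hb : ∀ᶠ t in 𝓝[>] (0:ℝ), (g (x + t • (y - x)) - g x) / t ≤ g y - g x := by
    filter_upwards [Ioo_mem_nhdsGT_of_mem (by norm_num : (0:ℝ) ∈ Set.Ico 0 1)] with t ht
    have h1 : x + t • (y - x) = (1 - t) • x + t • y := by
      rw [smul_sub, sub_smul, one_smul]; abel
    have h2 := hg.2 (Set.mem_univ x) (Set.mem_univ y) (by linarith [ht.2] : (0:ℝ) ≤ 1 - t)
      ht.1.le (by ring)
    simp only [smul_eq_mul] at h2
    rw [h1, div_le_iff₀ ht.1]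
    nlinarith [h2]
  have := le_of_tendsto T hb
  linarith

lemma subgrad_eq_grad {n : ℕ} {g : En n → ℝ} {a x v : En n} (h : HasGradientAt g a x)
    (hv : ∀ y, g x + ⟪v, y - x⟫ ≤ g y) : v = a := by
  have key : ∀ d, ⟪v, d⟫ ≤ ⟪a, d⟫ := by
    intro d
    refine ge_of_tendsto (slope_tendsto h d) ?_
    filter_upwards [self_mem_nhdsWithin] with t (ht : (0:ℝ) < t)
    have h1 := hv (x + t • d)
    have h2 : ⟪v, x + t • d - x⟫ = t * ⟪v, d⟫ := by
      rw [add_sub_cancel_left, real_inner_smul_right]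
    rw [le_div_iff₀ ht]
    nlinarith [h1]
  have h2 : ⟪v - a, v - a⟫ ≤ 0 := by
    have := key (v - a)
    rw [inner_sub_left] at *
    linarith
  have := real_inner_self_nonpos.mp h2
  exact sub_eq_zero.mp this

lemma prox_subgrad {n : ℕ} {g : En n → ℝ} (hg : ConvexOn ℝ Set.univ g) {μ : ℝ} (hμ : 0 < μ)
    {z xs : En n} (hopt : ∀ y, g xs + ‖xs - z‖ ^ 2 / (2 * μ) ≤ g y + ‖y - z‖ ^ 2 / (2 * μ))
    (y : En n) : g xs + ⟪μ⁻¹ • (z - xs), y - xs⟫ ≤ g y := by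
  set d := y - xs with hd
  have hC : Tendsto (fun t : ℝ => g y + t * (‖d‖ ^ 2 / (2 * μ))) (𝓝[>] (0:ℝ))
      (𝓝 (g y)) := by
    have : Tendsto (fun t : ℝ => g y + t * (‖d‖ ^ 2 / (2 * μ))) (𝓝 (0:ℝ))
        (𝓝 (g y + 0 * (‖d‖ ^ 2 / (2 * μ)))) := by
      exact (tendsto_const_nhds.add ((continuous_id.mul continuous_const).tendsto 0))
    simpa using this.mono_left nhdsWithin_le_nhds
  refine ge_of_tendsto hC ?_
  filter_upwards [Ioo_mem_nhdsGT_of_mem (by norm_num : (0:ℝ) ∈ Set.Ico 0 1)] with t ht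
  have hcv := hg.2 (Set.mem_univ xs) (Set.mem_univ y) (by linarith [ht.2] : (0:ℝ) ≤ 1 - t)
    ht.1.le (by ring)
  have h1 : (1 - t) • xs + t • y = xs + t • d := by
    rw [hd, smul_sub, sub_smul, one_smul]; abel
  rw [h1] at hcv
  have h2 := hopt (xs + t • d)
  have hnorm : ‖xs + t • d - z‖ ^ 2 = ‖xs - z‖ ^ 2 + 2 * (t * ⟪xs - z, d⟫) + t ^ 2 * ‖d‖ ^ 2 := by
    have e : xs + t • d - z = (xs - z) + t • d := by abel
    rw [e, norm_add_sq_real, real_inner_smul_right, norm_smul]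
    simp [mul_pow, sq_abs]
  rw [hnorm] at h2
  have hinner : ⟪μ⁻¹ • (z - xs), d⟫ = μ⁻¹ * ⟪z - xs, d⟫ := real_inner_smul_left _ _ _
  have hzs : ⟪z - xs, d⟫ = -⟪xs - z, d⟫ := by
    rw [show z - xs = -(xs - z) by abel, inner_neg_left]
  rw [hinner, hzs]
  simp only [smul_eq_mul] at hcv
  have h2μ : (0:ℝ) < 2 * μ := by linarith
  have hμne : μ ≠ 0 := ne_of_gt hμ
  have d1 : (2 * μ) * (‖xs - z‖ ^ 2 / (2 * μ)) = ‖xs - z‖ ^ 2 := by field_simp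
  have d2 : (2 * μ) * ((‖xs - z‖ ^ 2 + 2 * (t * ⟪xs - z, d⟫) + t ^ 2 * ‖d‖ ^ 2) / (2 * μ))
      = ‖xs - z‖ ^ 2 + 2 * (t * ⟪xs - z, d⟫) + t ^ 2 * ‖d‖ ^ 2 := by field_simp
  have h2' : (2 * μ) * g xs ≤ (2 * μ) * g (xs + t • d) + 2 * (t * ⟪xs - z, d⟫)
      + t ^ 2 * ‖d‖ ^ 2 := by
    have := mul_le_mul_of_nonneg_left h2 h2μ.le
    rw [mul_add, mul_add, d1, d2] at this
    linarith
  have d5 : (t * (2 * μ)) * (μ⁻¹ * -⟪xs - z, d⟫) = -2 * (t * ⟪xs - z, d⟫) := by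
    field_simp
  have d3 : (t * (2 * μ)) * (t * (‖d‖ ^ 2 / (2 * μ))) = t ^ 2 * ‖d‖ ^ 2 := by
    field_simp
  have hpos : (0:ℝ) < t * (2 * μ) := mul_pos ht.1 h2μ
  refine le_of_mul_le_mul_left ?_ hpos
  have hcv' := mul_le_mul_of_nonneg_left hcv h2μ.le
  nlinarith [h2', hcv', d5, d3]

lemma moreau_lower {n : ℕ} {g : En n → ℝ} {μ : ℝ} (hμ : 0 < μ) {zbar xgb : En n}
    (hv : ∀ y, g xgb + ⟪μ⁻¹ • (zbar - xgb), y - xgb⟫ ≤ g y) (z y : En n) :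
    g xgb + ‖xgb - zbar‖ ^ 2 / (2 * μ) + ⟪μ⁻¹ • (zbar - xgb), z - zbar⟫ ≤
      g y + ‖y - z‖ ^ 2 / (2 * μ) := by
  set w := zbar - xgb with hw
  have h1 := hv y
  have e1 : ⟪μ⁻¹ • w, y - xgb⟫ = μ⁻¹ * ⟪w, y - xgb⟫ := real_inner_smul_left _ _ _
  have e2 : ⟪μ⁻¹ • w, z - zbar⟫ = μ⁻¹ * ⟪w, z - zbar⟫ := real_inner_smul_left _ _ _
  have e3 : y - xgb = (y - z) + (z - zbar) + w := by rw [hw]; abel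
  have e4 : ⟪w, (y - z) + (z - zbar) + w⟫ = ⟪w, y - z⟫ + ⟪w, z - zbar⟫ + ‖w‖ ^ 2 := by
    rw [inner_add_right, inner_add_right, real_inner_self_eq_norm_sq]
  rw [e1, e3, e4] at h1
  rw [e2]
  have e6 : ‖xgb - zbar‖ = ‖w‖ := by rw [hw, norm_sub_rev]
  rw [e6]
  have hsq : (0:ℝ) ≤ ‖w‖ ^ 2 + 2 * ⟪w, y - z⟫ + ‖y - z‖ ^ 2 := by
    rw [← norm_add_sq_real]; positivity
  have h2μ : (0:ℝ) < 2 * μ := by linarith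
  have hμne : μ ≠ 0 := ne_of_gt hμ
  have d1 : (2 * μ) * (‖w‖ ^ 2 / (2 * μ)) = ‖w‖ ^ 2 := by field_simp
  have d2 : (2 * μ) * (‖y - z‖ ^ 2 / (2 * μ)) = ‖y - z‖ ^ 2 := by field_simp
  have d3 : (2 * μ) * μ⁻¹ = 2 := by field_simp
  refine le_of_mul_le_mul_left ?_ h2μ
  nlinarith [h1, hsq, d1, d2, d3, hμ]
end Aux

/-- if `z̄` is a local minimizer of `F_μ` on the ball of radius `r`
and `g` has an `L_g`-Lipschitz gradient, then `x_{μφ}(z̄)` is a local minimizer of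
`F` on the ball of radius `r/(μ L_g + 1)`. -/
theorem stmt7 {n : ℕ} (φ : En n → EReal) (g : En n → ℝ) (mφ μ : ℝ)
    (hproper : ProperE φ) (hlsc : LowerSemicontinuous φ)
    (hmφ : 0 ≤ mφ) (hweak : WeaklyConvexOn φ mφ)
    (hg : ConvexOn ℝ Set.univ g)
    (hμ : 0 < μ) (hμm : μ * mφ < 1)
    (Fstar : ℝ)
    (hmin : ∃ xs : En n, φ xs - ((g xs : ℝ) : EReal) = (Fstar : EReal) ∧
      ∀ x, (Fstar : EReal) ≤ φ x - ((g x : ℝ) : EReal))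
    (Mφ : En n → ℝ) (xφ : En n → En n) (hφprox : IsMoreau φ μ Mφ xφ)
    (Mg : En n → ℝ) (xg : En n → En n) (hgprox : IsMoreauR g μ Mg xg)
    (Lg : ℝ) (hLg : 0 ≤ Lg) (g' : En n → En n)
    (hgdiff : ∀ x, HasGradientAt g (g' x) x)
    (hgLip : ∀ x y, ‖g' x - g' y‖ ≤ Lg * ‖x - y‖)
    (zbar : En n) (r : ℝ) (hr : 0 < r)
    (hloc : ∀ z : En n, ‖z - zbar‖ ≤ r → Mφ zbar - Mg zbar ≤ Mφ z - Mg z) :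
    ∀ x : En n, ‖x - xφ zbar‖ ≤ r / (μ * Lg + 1) →
      φ (xφ zbar) - ((g (xφ zbar) : ℝ) : EReal) ≤ φ x - ((g x : ℝ) : EReal) := by
  intro x hx
  have h2μ : (0:ℝ) < 2 * μ := by linarith
  have hμne : μ ≠ 0 := ne_of_gt hμ
  obtain ⟨hMb1, hMb2, -⟩ := hφprox zbar
  obtain ⟨hGb1, hGb2, -⟩ := hgprox zbar
  set xb := xφ zbar with hxbdef
  set xgb := xg zbar with hxgbdef
  -- φ xb is real
  have hnetop : φ xb ≠ ⊤ := by
    intro h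
    rw [h, EReal.top_add_coe] at hMb1
    exact EReal.coe_ne_top _ hMb1
  have hnebot := hproper.2 xb
  have hp : φ xb = (((φ xb).toReal : ℝ) : EReal) := (EReal.coe_toReal hnetop hnebot).symm
  set p := (φ xb).toReal with hpdef
  have hMbr : Mφ zbar = p + ‖xb - zbar‖ ^ 2 / (2 * μ) := by
    rw [hp, ← EReal.coe_add] at hMb1
    exact_mod_cast hMb1
  -- real envelope inequality for φ
  have henv : ∀ z y : En n, ∀ q : ℝ, φ y = (q : EReal) → Mφ z ≤ q + ‖y - z‖ ^ 2 / (2 * μ) := by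
    intro z y q hq
    have h := (hφprox z).2.1 y
    rw [hq, ← EReal.coe_add] at h
    exact_mod_cast h
  -- prox optimality of xgb, subgradient v
  have hoptg : ∀ y, g xgb + ‖xgb - zbar‖ ^ 2 / (2 * μ) ≤ g y + ‖y - zbar‖ ^ 2 / (2 * μ) := by
    intro y
    have := hGb2 y
    linarith [hGb1]
  have hv : ∀ y, g xgb + ⟪μ⁻¹ • (zbar - xgb), y - xgb⟫ ≤ g y :=
    fun y => prox_subgrad hg hμ hoptg y
  have hveq : μ⁻¹ • (zbar - xgb) = g' xgb := subgrad_eq_grad (hgdiff xgb) hv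
  set v := μ⁻¹ • (zbar - xgb) with hvdef
  -- upper bound on Mφ near zbar
  have hup : ∀ z : En n, Mφ z ≤ Mφ zbar + ⟪μ⁻¹ • (zbar - xb), z - zbar⟫
      + ‖z - zbar‖ ^ 2 / (2 * μ) := by
    intro z
    have h1 := henv z xb p hp
    have h2 : xb - z = (xb - zbar) + (zbar - z) := by abel
    have h3 : ‖xb - z‖ ^ 2 = ‖xb - zbar‖ ^ 2 + 2 * ⟪xb - zbar, zbar - z⟫ + ‖zbar - z‖ ^ 2 := by
      rw [h2, norm_add_sq_real]
    have h4 : ⟪μ⁻¹ • (zbar - xb), z - zbar⟫ = μ⁻¹ * ⟪xb - zbar, zbar - z⟫ := by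
      rw [real_inner_smul_left, show zbar - xb = -(xb - zbar) by abel,
        show z - zbar = -(zbar - z) by abel, inner_neg_neg]
    have h5 : ‖z - zbar‖ = ‖zbar - z‖ := norm_sub_rev _ _
    have h6 : (‖xb - zbar‖ ^ 2 + 2 * ⟪xb - zbar, zbar - z⟫ + ‖zbar - z‖ ^ 2) / (2 * μ)
        = ‖xb - zbar‖ ^ 2 / (2 * μ) + μ⁻¹ * ⟪xb - zbar, zbar - z⟫
          + ‖zbar - z‖ ^ 2 / (2 * μ) := by
      field_simp
    rw [hMbr, h4, h5]
    rw [h3, h6] at h1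
    linarith
  -- lower bound on Mg near zbar
  have hlow : ∀ z : En n, Mg zbar + ⟪v, z - zbar⟫ ≤ Mg z := by
    intro z
    have h1 := moreau_lower hμ hv z (xg z)
    have h2 := (hgprox z).1
    rw [hGb1]
    linarith
  -- criticality: u = v
  have hcrit : μ⁻¹ • (zbar - xb) = v := by
    by_contra hne
    set u := μ⁻¹ • (zbar - xb) with hudef
    have hc : (0:ℝ) < ‖u - v‖ := norm_pos_iff.mpr (sub_ne_zero.mpr hne)
    set c := ‖u - v‖ with hcdef
    set t := min μ (r / c) with htdef
    have ht : 0 < t := lt_min hμ (div_pos hr hc)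
    set z := zbar - t • (u - v) with hzdef
    have hzz : z - zbar = -(t • (u - v)) := by rw [hzdef]; abel
    have hnz : ‖z - zbar‖ = t * c := by
      rw [hzz, norm_neg, norm_smul, Real.norm_eq_abs, abs_of_pos ht]
    have hzr : ‖z - zbar‖ ≤ r := by
      rw [hnz]
      have : t ≤ r / c := min_le_right _ _
      calc t * c ≤ (r / c) * c := by nlinarith
        _ = r := by field_simp
    have h1 := hloc z hzr
    have h2 := hup z
    have h3 := hlow z
    have hiu : ⟪u, z - zbar⟫ = -(t * ⟪u, u - v⟫) := by
      rw [hzz, inner_neg_right, real_inner_smul_right]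
    have hiv : ⟪v, z - zbar⟫ = -(t * ⟪v, u - v⟫) := by
      rw [hzz, inner_neg_right, real_inner_smul_right]
    have hdiff : ⟪u, u - v⟫ - ⟪v, u - v⟫ = c ^ 2 := by
      rw [hcdef, ← inner_sub_left, real_inner_self_eq_norm_sq]
    have hn2 : ‖z - zbar‖ ^ 2 = t ^ 2 * c ^ 2 := by rw [hnz]; ring
    rw [hiu] at h2
    rw [hiv] at h3
    rw [hn2] at h2
    -- 0 ≤ -t*c^2 + t^2*c^2/(2μ), t ≤ μ
    have htμ : t ≤ μ := min_le_left _ _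
    have hd : t ^ 2 * c ^ 2 / (2 * μ) ≤ t * c ^ 2 / 2 := by
      rw [div_le_div_iff₀ h2μ (by norm_num : (0:ℝ) < 2)]
      have hh := mul_le_mul_of_nonneg_right htμ (by positivity : (0:ℝ) ≤ t * c ^ 2)
      linarith
    have hdiff' : t * (⟪u, u - v⟫ - ⟪v, u - v⟫) = t * c ^ 2 := by rw [hdiff]
    have hpos : (0:ℝ) < t * c ^ 2 := by positivity
    linarith [h1, h2, h3, hd, hdiff', hpos]
  -- consequences
  have hxbg : xb = xgb := by
    have := hcrit
    rw [hvdef] at this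
    have h2 := smul_right_injective (En n) (inv_ne_zero hμne) this
    have h3 : zbar - (zbar - xb) = zbar - (zbar - xgb) := by rw [h2]
    simpa using h3
  have hzbar : zbar - xb = μ • g' xb := by
    rw [hxbg]
    have : μ • v = zbar - xgb := by
      rw [hvdef, smul_smul, mul_inv_cancel₀ hμne, one_smul]
    rw [← this, hveq]
  -- the comparison point
  set zx := x + μ • g' x with hzxdef
  have hzxr : ‖zx - zbar‖ ≤ r := by
    have e1 : zx - zbar = (x - xb) + μ • (g' x - g' xb) := by
      rw [hzxdef, smul_sub]
      rw [show zbar = xb + μ • g' xb by rw [← hzbar]; abel]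
      abel
    have e2 : ‖zx - zbar‖ ≤ ‖x - xb‖ + μ * ‖g' x - g' xb‖ := by
      rw [e1]
      calc ‖(x - xb) + μ • (g' x - g' xb)‖ ≤ ‖x - xb‖ + ‖μ • (g' x - g' xb)‖ := norm_add_le _ _
        _ = ‖x - xb‖ + μ * ‖g' x - g' xb‖ := by
            rw [norm_smul, Real.norm_eq_abs, abs_of_pos hμ]
    have e3 := hgLip x xb
    have hd : 0 < μ * Lg + 1 := by positivity
    have e4 : ‖x - xb‖ * (μ * Lg + 1) ≤ r := by
      rw [← le_div_iff₀ hd]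
      exact hx
    have hnn : 0 ≤ ‖x - xb‖ := norm_nonneg _
    have e3' := mul_le_mul_of_nonneg_left e3 hμ.le
    linarith [e2, e3', e4]
  have hloc2 := hloc zx hzxr
  -- Mg lower bound at zx
  have hvx : ∀ y, g x + ⟪μ⁻¹ • (zx - x), y - x⟫ ≤ g y := by
    intro y
    have e : μ⁻¹ • (zx - x) = g' x := by
      rw [hzxdef, show x + μ • g' x - x = μ • g' x by abel, smul_smul,
        inv_mul_cancel₀ hμne, one_smul]
    rw [e]
    exact grad_subgrad hg (hgdiff x) y
  have hMgzx : g x + ‖x - zx‖ ^ 2 / (2 * μ) ≤ Mg zx := by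
    have h1 := moreau_lower hμ hvx zx (xg zx)
    have h2 := (hgprox zx).1
    simp only [sub_self, inner_zero_right, add_zero] at h1
    linarith
  -- F(xb) ≤ Fμ(zbar)
  have hFb : p - g xb ≤ Mφ zbar - Mg zbar := by
    have := hGb2 xb
    rw [hMbr]
    linarith
  -- finish
  rw [hp]
  by_cases hxt : φ x = ⊤
  · rw [hxt]
    rw [EReal.top_sub_coe]
    exact le_top
  · have hq : φ x = (((φ x).toReal : ℝ) : EReal) := (EReal.coe_toReal hxt (hproper.2 x)).symm
    set q := (φ x).toReal with hqdef
    rw [hq]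
    have hq1 : Mφ zx ≤ q + ‖x - zx‖ ^ 2 / (2 * μ) := henv zx x q hq
    rw [← EReal.coe_sub, ← EReal.coe_sub, EReal.coe_le_coe_iff]
    linarith
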